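/- For every integer T ≥ 0 and every nonnegative integer n, the dimension over K of the space e_i A e_{i+n} (the span of paths from vertex i to vertex i+n modulo the relations) equals: 2T+1 if n ≡ 0 (mod 4); 2T+2 if n ≡ 1 (mod 4); 2T+1 if n ≡ 2 (mod 4); and 2T if n ≡ 3 (mod 4). In particular this dimension is independent of i, and the total dimension of A is 4·(2T+1) + 4·(2T+2) + 4·(2T+1) + 4·(2T) = 32T+16. -/

import Mathlib

noncomputable section

/-- Generators: the vertices `e_i` (`i : ZMod 4`) and the arrows
`a_{l,m} : e_m → e_{m+1}` (`l : ZMod 2`, `m : ZMod 4`). -/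
abbrev QGen : Type := (ZMod 4) ⊕ (ZMod 2 × ZMod 4)

variable (K : Type*) [Field K]

/-- The vertex generator `e_i` in the free algebra. -/
def vgen (i : ZMod 4) : FreeAlgebra K QGen := FreeAlgebra.ι K (Sum.inl i)

/-- The arrow generator `a_{l,m}` in the free algebra. -/
def agen (l : ZMod 2) (m : ZMod 4) : FreeAlgebra K QGen := FreeAlgebra.ι K (Sum.inr (l, m))

/-- `x_l = Σ_m a_{l,m}` in the free algebra. -/
def xgen (l : ZMod 2) : FreeAlgebra K QGen := ∑ m : ZMod 4, agen K l m

/-- Reduction of a vertex index mod 4 to an `x`-index mod 2. -/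
def toL (i : ZMod 4) : ZMod 2 := (i.val : ZMod 2)

/-- The defining relations of `A_T(q_0,q_1,q_2,q_3)`: the path-algebra relations
of the cyclic quiver with vertices `e_0,…,e_3` and arrows
`a_{0,m}, a_{1,m} : e_m → e_{m+1}`, together with `x_l x_{l+1} = 0` and
`e_i (q_i x_i^{4T+2} + x_{i+1}^{4T+2}) = 0`. -/
inductive ARel (T : ℕ) (q : ZMod 4 → K) : FreeAlgebra K QGen → FreeAlgebra K QGen → Prop
  | vert (i j : ZMod 4) :
      ARel T q (vgen K i * vgen K j) (if i = j then vgen K i else 0)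
  | sum_vert : ARel T q (∑ i : ZMod 4, vgen K i) 1
  | left (l : ZMod 2) (m : ZMod 4) : ARel T q (vgen K m * agen K l m) (agen K l m)
  | right (l : ZMod 2) (m : ZMod 4) : ARel T q (agen K l m * vgen K (m + 1)) (agen K l m)
  | left_zero (l : ZMod 2) (m j : ZMod 4) (h : j ≠ m) : ARel T q (vgen K j * agen K l m) 0
  | right_zero (l : ZMod 2) (m j : ZMod 4) (h : j ≠ m + 1) : ARel T q (agen K l m * vgen K j) 0
  | zigzag (l : ZMod 2) : ARel T q (xgen K l * xgen K (l + 1)) 0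
  | socle (i : ZMod 4) :
      ARel T q (vgen K i * (q i • xgen K (toL i) ^ (4 * T + 2)
        + xgen K (toL (i + 1)) ^ (4 * T + 2))) 0

/-- The self-injective special biserial algebra `A = A_T(q_0,q_1,q_2,q_3)`. -/
def AT (T : ℕ) (q : ZMod 4 → K) : Type _ := RingQuot (ARel K T q)

instance (T : ℕ) (q : ZMod 4 → K) : Ring (AT K T q) := inferInstanceAs (Ring (RingQuot _))
instance (T : ℕ) (q : ZMod 4 → K) : Algebra K (AT K T q) :=
  inferInstanceAs (Algebra K (RingQuot _))

/-- The vertex idempotent `e_i` in `A`. -/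
def Ae (T : ℕ) (q : ZMod 4 → K) (i : ZMod 4) : AT K T q :=
  RingQuot.mkAlgHom K (ARel K T q) (vgen K i)

/-- The arrow `a_{l,m}` in `A`. -/
def Aa (T : ℕ) (q : ZMod 4 → K) (l : ZMod 2) (m : ZMod 4) : AT K T q :=
  RingQuot.mkAlgHom K (ARel K T q) (agen K l m)

/-- `x_l = Σ_m a_{l,m}` in `A`. -/
def Ax (T : ℕ) (q : ZMod 4 → K) (l : ZMod 2) : AT K T q :=
  RingQuot.mkAlgHom K (ARel K T q) (xgen K l)

/-- The `K`-linear map `a ↦ e_i · a · e_t` on `A`, whose range is the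
subspace `e_i A e_t`. -/
def sandwich (T : ℕ) (q : ZMod 4 → K) (i t : ZMod 4) : AT K T q →ₗ[K] AT K T q :=
  (LinearMap.mulLeft K (Ae K T q i)).comp (LinearMap.mulRight K (Ae K T q t))

/- model vector space -/
abbrev QP : Type := ZMod 4 × ℕ × ZMod 2

abbrev QV : Type _ := QP →₀ K

variable (T : ℕ) (q : ZMod 4 → K)

def cc (i : ZMod 4) : K := if toL i = 0 then -q i else -(q i)⁻¹

def nf (i : ZMod 4) (s : ℕ) (l : ZMod 2) : QV K :=
  if s = 0 then Finsupp.single (i, 0, 0) 1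
  else if s < 4 * T + 2 then Finsupp.single (i, s, l) 1
  else if s = 4 * T + 2 then (if l = 0 then (1 : K) else cc K q i) • Finsupp.single (i, 4 * T + 2, 0) 1
  else 0

def fgen : QGen → Module.End K (QV K)
  | Sum.inl i => Finsupp.lsum K fun p =>
      LinearMap.toSpanSingleton K (QV K) (if p.1 = i then Finsupp.single p 1 else 0)
  | Sum.inr (l, m) => Finsupp.lsum K fun p =>
      LinearMap.toSpanSingleton K (QV K)
        (if p.1 = m + 1 ∧ (p.2.1 = 0 ∨ p.2.2 = l) then nf K T q m (p.2.1 + 1) l else 0)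

lemma fgen_inl_single (i : ZMod 4) (p : QP) (k : K) :
    fgen K T q (Sum.inl i) (Finsupp.single p k)
      = if p.1 = i then Finsupp.single p k else 0 := by
  simp only [fgen, Finsupp.lsum_single, LinearMap.toSpanSingleton_apply]
  split <;> simp [Finsupp.smul_single]

lemma fgen_inr_single (l : ZMod 2) (m : ZMod 4) (p : QP) (k : K) :
    fgen K T q (Sum.inr (l, m)) (Finsupp.single p k)
      = if p.1 = m + 1 ∧ (p.2.1 = 0 ∨ p.2.2 = l) then k • nf K T q m (p.2.1 + 1) l else 0 := by
  simp only [fgen, Finsupp.lsum_single, LinearMap.toSpanSingleton_apply]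
  split <;> simp

def rho : FreeAlgebra K QGen →ₐ[K] Module.End K (QV K) := FreeAlgebra.lift K (fgen K T q)

lemma rho_vgen (i : ZMod 4) : rho K T q (vgen K i) = fgen K T q (Sum.inl i) :=
  FreeAlgebra.lift_ι_apply _ _

lemma rho_agen (l : ZMod 2) (m : ZMod 4) :
    rho K T q (agen K l m) = fgen K T q (Sum.inr (l, m)) :=
  FreeAlgebra.lift_ι_apply _ _

lemma rho_xgen_single (l : ZMod 2) (j : ZMod 4) (s : ℕ) (l' : ZMod 2) (k : K) :
    rho K T q (xgen K l) (Finsupp.single (j, s, l') k)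
      = if s = 0 ∨ l' = l then k • nf K T q (j - 1) (s + 1) l else 0 := by
  rw [xgen, map_sum]
  rw [LinearMap.sum_apply]
  simp_rw [rho_agen, fgen_inr_single]
  rw [Finset.sum_eq_single (j - 1)]
  · have h : j - 1 + 1 = j := by ring
    simp [h]
  · intro m _ hm
    rw [if_neg]
    rintro ⟨h1, -⟩
    exact hm (by rw [h1]; ring)
  · simp

lemma nf_eq_zero_of_gt (i : ZMod 4) (s : ℕ) (l : ZMod 2) (h : 4 * T + 2 < s) :
    nf K T q i s l = 0 := by
  rw [nf, if_neg (by omega), if_neg (by omega), if_neg (by omega)]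

lemma rho_xgen_nf (l : ZMod 2) (j : ZMod 4) (s : ℕ) (l' : ZMod 2) :
    rho K T q (xgen K l) (nf K T q j s l')
      = if s = 0 ∨ l' = l then nf K T q (j - 1) (s + 1) l else 0 := by
  rcases Nat.lt_or_ge s (4 * T + 2) with hs | hs
  · rcases Nat.eq_zero_or_pos s with h0 | h0
    · subst h0
      rw [nf, if_pos rfl, rho_xgen_single, if_pos (Or.inl rfl), if_pos (Or.inl rfl), one_smul]
    · rw [nf, if_neg (by omega), if_pos hs, rho_xgen_single, one_smul]
  · rcases Nat.eq_or_lt_of_le hs with h2 | h2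
    · subst h2
      have hnf : nf K T q (j - 1) (4 * T + 2 + 1) l = 0 :=
        nf_eq_zero_of_gt K T q _ _ _ (by omega)
      rw [nf, if_neg (by omega), if_neg (by omega), if_pos rfl, map_smul, rho_xgen_single]
      simp [hnf]
    · rw [nf_eq_zero_of_gt K T q _ _ _ h2, map_zero,
        nf_eq_zero_of_gt K T q _ _ _ (by omega)]
      split <;> rfl

lemma rho_xgen_pow_nf (l : ZMod 2) (k : ℕ) (j : ZMod 4) (s : ℕ) (l' : ZMod 2) :
    (rho K T q (xgen K l) ^ k) (nf K T q j s l')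
      = if k = 0 then nf K T q j s l'
        else if s = 0 ∨ l' = l then nf K T q (j - (k : ZMod 4)) (s + k) l else 0 := by
  induction k generalizing j s l' with
  | zero => simp
  | succ k ih =>
    rw [pow_succ, Module.End.mul_apply, rho_xgen_nf]
    by_cases hc : s = 0 ∨ l' = l
    · rw [if_pos hc, ih]
      have h1 : ¬(k + 1 = 0) := Nat.succ_ne_zero k
      rcases Nat.eq_zero_or_pos k with h0 | h0
      · subst h0
        simp only [if_pos rfl, if_neg h1, if_pos hc]
        norm_num
      · simp only [if_neg (by omega : ¬ k = 0), if_neg h1, if_pos hc,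
          if_pos (show s + 1 = 0 ∨ l = l from Or.inr rfl)]
        have h2 : j - 1 - (k : ZMod 4) = j - ((k + 1 : ℕ) : ZMod 4) := by push_cast; ring
        have h3 : s + 1 + k = s + (k + 1) := by omega
        rw [h2, h3]
        simp
    · rw [if_neg hc, map_zero, if_neg (Nat.succ_ne_zero k), if_neg hc]

lemma zmod2_cases (l : ZMod 2) : l = 0 ∨ l = 1 := by revert l; decide

lemma zmod2_succ_ne (l : ZMod 2) : l + 1 ≠ l := by revert l; decide

lemma toL_succ (i : ZMod 4) : toL (i + 1) = toL i + 1 := by revert i; decide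

lemma fgen_inl_nf (i j : ZMod 4) (s : ℕ) (l : ZMod 2) :
    fgen K T q (Sum.inl i) (nf K T q j s l)
      = if j = i then nf K T q j s l else 0 := by
  rcases eq_or_ne j i with rfl | hji
  · rw [if_pos rfl]
    unfold nf
    split_ifs <;> simp [fgen_inl_single]
  · rw [if_neg hji]
    unfold nf
    split_ifs <;> simp [fgen_inl_single, hji]

lemma rho_xgen_pow_single (l : ZMod 2) (k : ℕ) (j : ZMod 4) (s : ℕ) (l' : ZMod 2) (b : K) :
    (rho K T q (xgen K l) ^ (k + 1)) (Finsupp.single (j, s, l') b)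
      = if s = 0 ∨ l' = l then b • nf K T q (j - ((k + 1 : ℕ) : ZMod 4)) (s + (k + 1)) l
        else 0 := by
  rw [pow_succ, Module.End.mul_apply, rho_xgen_single]
  split
  · rw [map_smul, rho_xgen_pow_nf]
    rcases Nat.eq_zero_or_pos k with rfl | h0
    · norm_num
    · rw [if_neg (by omega), if_pos (Or.inr rfl)]
      have h2 : j - 1 - (k : ZMod 4) = j - ((k + 1 : ℕ) : ZMod 4) := by push_cast; ring
      have h3 : s + 1 + k = s + (k + 1) := by omega
      rw [h2, h3]
  · simp

lemma relCheck (hq : ∀ i, q i ≠ 0) :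
    ∀ x y, ARel K T q x y → rho K T q x = rho K T q y := by
  intro x y h
  induction h with
  | vert i j =>
    apply Finsupp.lhom_ext
    intro p b
    rcases eq_or_ne i j with rfl | hij
    · rw [if_pos rfl, map_mul, Module.End.mul_apply]
      simp only [rho_vgen]
      by_cases hp : p.1 = i
      · simp [fgen_inl_single, hp]
      · simp [fgen_inl_single, hp]
    · rw [if_neg hij, map_mul, map_zero, Module.End.mul_apply, LinearMap.zero_apply]
      simp only [rho_vgen]
      by_cases hp : p.1 = j
      · simp [fgen_inl_single, hp, hij.symm]
      · simp [fgen_inl_single, hp]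
  | sum_vert =>
    apply Finsupp.lhom_ext
    intro p b
    simp only [map_sum, map_one, LinearMap.sum_apply, Module.End.one_apply, rho_vgen,
      fgen_inl_single]
    simp
  | left l m =>
    apply Finsupp.lhom_ext
    intro p b
    simp only [map_mul, Module.End.mul_apply, rho_vgen, rho_agen]
    by_cases hc : p.1 = m + 1 ∧ (p.2.1 = 0 ∨ p.2.2 = l)
    · simp [fgen_inr_single, fgen_inl_nf, hc]
    · simp [fgen_inr_single, hc]
  | right l m =>
    apply Finsupp.lhom_ext
    intro p b
    simp only [map_mul, Module.End.mul_apply, rho_vgen, rho_agen, fgen_inl_single]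
    by_cases hp : p.1 = m + 1
    · simp [hp]
    · simp [fgen_inr_single, hp]
  | left_zero l m j hj =>
    apply Finsupp.lhom_ext
    intro p b
    simp only [map_mul, map_zero, Module.End.mul_apply, LinearMap.zero_apply, rho_vgen,
      rho_agen]
    by_cases hc : p.1 = m + 1 ∧ (p.2.1 = 0 ∨ p.2.2 = l)
    · simp [fgen_inr_single, fgen_inl_nf, hc, Ne.symm hj]
    · simp [fgen_inr_single, hc]
  | right_zero l m j hj =>
    apply Finsupp.lhom_ext
    intro p b
    simp only [map_mul, map_zero, Module.End.mul_apply, LinearMap.zero_apply, rho_vgen,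
      rho_agen, fgen_inl_single]
    by_cases hp : p.1 = j
    · have h2 : ¬(p.1 = m + 1) := by rw [hp]; exact hj
      simp [fgen_inr_single, hp, h2]
      exact fun h => absurd h hj
    · simp [hp]
  | zigzag l =>
    apply Finsupp.lhom_ext
    rintro ⟨j, s, l'⟩ b
    simp only [map_mul, map_zero, Module.End.mul_apply, LinearMap.zero_apply,
      rho_xgen_single]
    by_cases hc : s = 0 ∨ l' = l + 1
    · rw [if_pos hc, map_smul, rho_xgen_nf,
        if_neg (by push_neg; exact ⟨Nat.succ_ne_zero s, zmod2_succ_ne l⟩), smul_zero]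
    · rw [if_neg hc, map_zero]
  | socle i =>
    apply Finsupp.lhom_ext
    rintro ⟨j, s, l'⟩ b
    have h42 : 4 * T + 2 = (4 * T + 1) + 1 := by omega
    simp only [map_mul, map_add, map_smul, map_pow, map_zero, Module.End.mul_apply,
      LinearMap.add_apply, LinearMap.smul_apply, LinearMap.zero_apply, rho_vgen, toL_succ]
    rw [h42, rho_xgen_pow_single, rho_xgen_pow_single]
    rcases Nat.eq_zero_or_pos s with rfl | hs
    · rw [if_pos (Or.inl rfl), if_pos (Or.inl rfl)]
      set z := j - ((4 * T + 1 + 1 : ℕ) : ZMod 4) with hz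
      have hnf : ∀ lx : ZMod 2, nf K T q z (0 + (4 * T + 1 + 1)) lx
          = (if lx = 0 then (1 : K) else cc K q z) • Finsupp.single (z, 4 * T + 2, 0) 1 := by
        intro lx
        rw [nf, if_neg (by omega), if_neg (by omega), if_pos (by omega)]
      rw [hnf, hnf]
      simp only [map_smul, fgen_inl_single]
      have key : q i * (b * (if toL i = 0 then (1 : K) else cc K q i))
          + b * (if toL i + 1 = 0 then (1 : K) else cc K q i) = 0 := by
        rcases zmod2_cases (toL i) with h0 | h0 <;> rw [h0, cc, h0]
        · rw [if_pos rfl, if_pos rfl, if_neg (by decide)]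
          ring
        · rw [if_neg (by decide), if_neg (by decide), if_pos (by decide)]
          field_simp [hq i]
          ring
      by_cases hzi : z = i
      · rw [if_pos hzi, hzi]
        simp only [smul_smul]
        rw [← add_smul, key, zero_smul]
      · rw [if_neg hzi]
        simp
    · have hz1 : ∀ lx : ZMod 2,
          nf K T q (j - ((4 * T + 1 + 1 : ℕ) : ZMod 4)) (s + (4 * T + 1 + 1)) lx = 0 :=
        fun lx => nf_eq_zero_of_gt K T q _ _ _ (by omega)
      rw [hz1, hz1]
      simp


def rhoBar (hq : ∀ i, q i ≠ 0) : AT K T q →ₐ[K] Module.End K (QV K) :=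
  RingQuot.liftAlgHom K ⟨rho K T q, relCheck K T q hq⟩

lemma rhoBar_mk (hq : ∀ i, q i ≠ 0) (a : FreeAlgebra K QGen) :
    rhoBar K T q hq (RingQuot.mkAlgHom K (ARel K T q) a) = rho K T q a :=
  RingQuot.liftAlgHom_mkAlgHom_apply K _ _ _

lemma Ae_mul_Ae (i j : ZMod 4) :
    Ae K T q i * Ae K T q j = if i = j then Ae K T q i else 0 := by
  have h := RingQuot.mkAlgHom_rel K (ARel.vert (T := T) (q := q) i j)
  rw [map_mul] at h
  rcases eq_or_ne i j with rfl | hne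
  · rw [if_pos rfl] at h ⊢; exact h
  · rw [if_neg hne] at h ⊢
    rw [map_zero] at h
    exact h

lemma sum_Ae : ∑ i, Ae K T q i = 1 := by
  have : (∑ i, Ae K T q i) = RingQuot.mkAlgHom K (ARel K T q) (∑ i, vgen K i) := by
    rw [map_sum]; rfl
  rw [this, RingQuot.mkAlgHom_rel K ARel.sum_vert, map_one]
  rfl

lemma Ae_mul_Aa (j : ZMod 4) (l : ZMod 2) (m : ZMod 4) :
    Ae K T q j * Aa K T q l m = if j = m then Aa K T q l m else 0 := by
  rcases eq_or_ne j m with rfl | h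
  · rw [if_pos rfl]
    have h2 := RingQuot.mkAlgHom_rel K (ARel.left (T := T) (q := q) l j)
    rw [map_mul] at h2
    exact h2
  · rw [if_neg h]
    have h2 := RingQuot.mkAlgHom_rel K (ARel.left_zero (T := T) (q := q) l m j h)
    rw [map_mul, map_zero] at h2
    exact h2

lemma Aa_mul_Ae (l : ZMod 2) (m j : ZMod 4) :
    Aa K T q l m * Ae K T q j = if j = m + 1 then Aa K T q l m else 0 := by
  rcases eq_or_ne j (m + 1) with h | h
  · rw [if_pos h, h]
    have h2 := RingQuot.mkAlgHom_rel K (ARel.right (T := T) (q := q) l m)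
    rw [map_mul] at h2
    exact h2
  · rw [if_neg h]
    have h2 := RingQuot.mkAlgHom_rel K (ARel.right_zero (T := T) (q := q) l m j h)
    rw [map_mul, map_zero] at h2
    exact h2

lemma Ax_sum (l : ZMod 2) : Ax K T q l = ∑ m, Aa K T q l m := by
  rw [Ax, xgen, map_sum]; rfl

lemma Ae_mul_Ax (j : ZMod 4) (l : ZMod 2) : Ae K T q j * Ax K T q l = Aa K T q l j := by
  rw [Ax_sum, Finset.mul_sum]
  simp_rw [Ae_mul_Aa]
  simp

lemma Ax_mul_Ae (l : ZMod 2) (j : ZMod 4) :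
    Ax K T q l * Ae K T q j = Aa K T q l (j - 1) := by
  rw [Ax_sum, Finset.sum_mul]
  simp_rw [Aa_mul_Ae]
  rw [Finset.sum_eq_single (j - 1)]
  · have h : j - 1 + 1 = j := by ring
    rw [if_pos h.symm]
  · intro m _ hm
    rw [if_neg]
    intro h1
    exact hm (by rw [h1]; ring)
  · simp

lemma Ax_mul_Ae' (l : ZMod 2) (j : ZMod 4) :
    Ax K T q l * Ae K T q j = Ae K T q (j - 1) * Ax K T q l := by
  rw [Ax_mul_Ae, Ae_mul_Ax]

lemma Ax_pow_mul_Ae (l : ZMod 2) (s : ℕ) (j : ZMod 4) :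
    Ax K T q l ^ s * Ae K T q j = Ae K T q (j - (s : ZMod 4)) * Ax K T q l ^ s := by
  induction s generalizing j with
  | zero => simp
  | succ s ih =>
    rw [pow_succ, mul_assoc, Ax_mul_Ae', ← mul_assoc, ih, mul_assoc, ← pow_succ]
    have h : j - 1 - (s : ZMod 4) = j - ((s + 1 : ℕ) : ZMod 4) := by push_cast; ring
    rw [h]

lemma Ax_zig (l : ZMod 2) : Ax K T q l * Ax K T q (l + 1) = 0 := by
  have h := RingQuot.mkAlgHom_rel K (ARel.zigzag (T := T) (q := q) l)
  rw [map_mul, map_zero] at h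
  exact h

lemma zmod2_ne_iff (l l' : ZMod 2) (h : l ≠ l') : l' = l + 1 := by revert l l'; decide

lemma zmod2_add_one_add_one (l : ZMod 2) : l + 1 + 1 = l := by revert l; decide

lemma Ax_pow_mul_Ax_pow (l l' : ZMod 2) (h : l ≠ l') (s s' : ℕ) (hs : s ≠ 0) (hs' : s' ≠ 0) :
    Ax K T q l ^ s * Ax K T q l' ^ s' = 0 := by
  obtain ⟨a, rfl⟩ := Nat.exists_eq_succ_of_ne_zero hs
  obtain ⟨b, rfl⟩ := Nat.exists_eq_succ_of_ne_zero hs'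
  rw [pow_succ, pow_succ', mul_assoc, ← mul_assoc (Ax K T q l), zmod2_ne_iff l l' h,
    Ax_zig, zero_mul, mul_zero]

lemma socle_AT (i : ZMod 4) :
    Ae K T q i * (q i • Ax K T q (toL i) ^ (4 * T + 2)
      + Ax K T q (toL i + 1) ^ (4 * T + 2)) = 0 := by
  have h := RingQuot.mkAlgHom_rel K (ARel.socle (T := T) (q := q) i)
  rw [map_mul, map_add, map_smul, map_pow, map_pow, map_zero, toL_succ] at h
  exact h

lemma Ae_top_swap (hq : ∀ i, q i ≠ 0) (i : ZMod 4) (l : ZMod 2) :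
    Ae K T q i * Ax K T q l ^ (4 * T + 2)
      = (if l = toL i then -(q i)⁻¹ else -(q i)) •
          (Ae K T q i * Ax K T q (l + 1) ^ (4 * T + 2)) := by
  have h := socle_AT K T q i
  rw [mul_add, mul_smul_comm] at h
  rcases eq_or_ne l (toL i) with rfl | hne
  · rw [if_pos rfl]
    have h2 : q i • (Ae K T q i * Ax K T q (toL i) ^ (4 * T + 2))
        = -(Ae K T q i * Ax K T q (toL i + 1) ^ (4 * T + 2)) := by
      rw [eq_neg_iff_add_eq_zero]; exact h
    have h3 := congrArg (fun z => (q i)⁻¹ • z) h2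
    simp only [smul_smul, inv_mul_cancel₀ (hq i), one_smul] at h3
    rw [h3, smul_neg, neg_smul]
  · have hl : toL i = l + 1 := zmod2_ne_iff l (toL i) hne
    rw [if_neg hne, neg_smul]
    rw [hl, zmod2_add_one_add_one] at h
    have h2 : Ae K T q i * Ax K T q l ^ (4 * T + 2)
        = -(q i • (Ae K T q i * Ax K T q (l + 1) ^ (4 * T + 2))) := by
      rw [eq_neg_iff_add_eq_zero, add_comm]; exact h
    rw [h2]

lemma Ae_mul_top3 (hq : ∀ i, q i ≠ 0) (i : ZMod 4) (l : ZMod 2) :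
    Ae K T q i * Ax K T q l ^ (4 * T + 3) = 0 := by
  have h : Ax K T q l ^ (4 * T + 3) = Ax K T q l ^ (4 * T + 2) * Ax K T q l := by
    rw [← pow_succ]
  rw [h, ← mul_assoc, Ae_top_swap K T q hq i l, smul_mul_assoc, mul_assoc,
    show Ax K T q (l + 1) ^ (4 * T + 2) * Ax K T q l
      = Ax K T q (l + 1) ^ (4 * T + 2) * Ax K T q l ^ 1 by rw [pow_one],
    Ax_pow_mul_Ax_pow K T q (l + 1) l (zmod2_succ_ne l) _ _ (by omega) one_ne_zero,
    mul_zero, smul_zero]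

lemma Ae_mul_pow_ge (hq : ∀ i, q i ≠ 0) (i : ZMod 4) (l : ZMod 2) (s : ℕ)
    (h : 4 * T + 3 ≤ s) : Ae K T q i * Ax K T q l ^ s = 0 := by
  have h2 : s = (4 * T + 3) + (s - (4 * T + 3)) := by omega
  rw [h2, pow_add, ← mul_assoc, Ae_mul_top3 K T q hq, zero_mul]



def el (p : QP) : AT K T q := Ae K T q p.1 * Ax K T q p.2.2 ^ p.2.1

lemma el_mul (i j : ZMod 4) (s s' : ℕ) (l l' : ZMod 2) :
    el K T q (i, s, l) * el K T q (j, s', l')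
      = if i = j - (s : ZMod 4)
          then Ae K T q i * (Ax K T q l ^ s * Ax K T q l' ^ s') else 0 := by
  show Ae K T q i * Ax K T q l ^ s * (Ae K T q j * Ax K T q l' ^ s') = _
  rw [mul_assoc, ← mul_assoc (Ax K T q l ^ s), Ax_pow_mul_Ae, ← mul_assoc, ← mul_assoc,
    Ae_mul_Ae]
  split
  · rw [mul_assoc]
  · rw [zero_mul, zero_mul]

lemma el_mul_mem (p p' : QP) :
    el K T q p * el K T q p' ∈ Submodule.span K (Set.range (el K T q)) := by
  rcases p with ⟨i, s, l⟩
  rcases p' with ⟨j, s', l'⟩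
  rw [el_mul]
  split
  · rcases Nat.eq_zero_or_pos s with rfl | hs
    · rw [pow_zero, one_mul]
      exact Submodule.subset_span ⟨(i, s', l'), rfl⟩
    rcases Nat.eq_zero_or_pos s' with rfl | hs'
    · rw [pow_zero, mul_one]
      exact Submodule.subset_span ⟨(i, s, l), rfl⟩
    rcases eq_or_ne l l' with rfl | hll
    · rw [← pow_add]
      exact Submodule.subset_span ⟨(i, s + s', l), rfl⟩
    · rw [Ax_pow_mul_Ax_pow K T q l l' hll s s' (by omega) (by omega), mul_zero]
      exact Submodule.zero_mem _
  · exact Submodule.zero_mem _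

lemma one_mem_span : (1 : AT K T q) ∈ Submodule.span K (Set.range (el K T q)) := by
  rw [← sum_Ae]
  refine Submodule.sum_mem _ fun i _ => ?_
  have : Ae K T q i = el K T q (i, 0, 0) := by
    rw [el]; simp
  rw [this]
  exact Submodule.subset_span ⟨(i, 0, 0), rfl⟩

lemma span_el_mul_closed {a b : AT K T q}
    (ha : a ∈ Submodule.span K (Set.range (el K T q)))
    (hb : b ∈ Submodule.span K (Set.range (el K T q))) :
    a * b ∈ Submodule.span K (Set.range (el K T q)) := by
  induction ha using Submodule.span_induction generalizing b with
  | mem x hx =>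
    induction hb using Submodule.span_induction with
    | mem y hy =>
      obtain ⟨p, rfl⟩ := hx
      obtain ⟨p', rfl⟩ := hy
      exact el_mul_mem K T q p p'
    | zero => rw [mul_zero]; exact Submodule.zero_mem _
    | add y z _ _ hy hz => rw [mul_add]; exact Submodule.add_mem _ hy hz
    | smul c y _ hy => rw [mul_smul_comm]; exact Submodule.smul_mem _ c hy
  | zero => rw [zero_mul]; exact Submodule.zero_mem _
  | add x y _ _ hx hy =>
    rw [add_mul]
    exact Submodule.add_mem _ (hx hb) (hy hb)
  | smul c x _ hx =>
    rw [smul_mul_assoc]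
    exact Submodule.smul_mem _ c (hx hb)

lemma top_le_span_el :
    (⊤ : Submodule K (AT K T q)) ≤ Submodule.span K (Set.range (el K T q)) := by
  intro z _
  obtain ⟨w, rfl⟩ := RingQuot.mkAlgHom_surjective K (ARel K T q) z
  induction w using FreeAlgebra.induction with
  | grade0 k =>
    rw [AlgHom.commutes]
    rw [Algebra.algebraMap_eq_smul_one]
    exact Submodule.smul_mem _ k (one_mem_span K T q)
  | grade1 g =>
    rcases g with i | ⟨l, m⟩
    · have : RingQuot.mkAlgHom K (ARel K T q) (FreeAlgebra.ι K (Sum.inl i))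
          = el K T q (i, 0, 0) := by
        rw [el]; simp; rfl
      rw [this]
      exact Submodule.subset_span ⟨(i, 0, 0), rfl⟩
    · have : RingQuot.mkAlgHom K (ARel K T q) (FreeAlgebra.ι K (Sum.inr (l, m)))
          = el K T q (m, 1, l) := by
        rw [el]
        simp only [pow_one]
        rw [Ae_mul_Ax]
        rfl
      rw [this]
      exact Submodule.subset_span ⟨(m, 1, l), rfl⟩
  | mul a b ha hb =>
    rw [map_mul]
    exact span_el_mul_closed K T q (ha trivial) (hb trivial)
  | add a b ha hb =>
    rw [map_add]
    exact Submodule.add_mem _ (ha trivial) (hb trivial)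

/- canonical index set -/
abbrev Jc (T : ℕ) : Type := Unit ⊕ (ZMod 2 × Fin (4 * T + 1)) ⊕ Unit

def degJ : Jc T → ℕ
  | Sum.inl _ => 0
  | Sum.inr (Sum.inl (_, k)) => (k : ℕ) + 1
  | Sum.inr (Sum.inr _) => 4 * T + 2

def labJ : Jc T → ZMod 2
  | Sum.inl _ => 0
  | Sum.inr (Sum.inl (l, _)) => l
  | Sum.inr (Sum.inr _) => 0

def emb (u : ZMod 4 × Jc T) : QP := (u.1, degJ T u.2, labJ T u.2)

lemma emb_inj : Function.Injective (emb T) := by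
  rintro ⟨i, u⟩ ⟨j, v⟩ h
  rw [emb, emb, Prod.mk.injEq, Prod.mk.injEq] at h
  obtain ⟨rfl, hd, hl⟩ := h
  congr 1
  rcases u with u | ⟨⟨l, k⟩⟩ | u <;> rcases v with v | ⟨⟨l', k'⟩⟩ | v <;>
      simp only [degJ, labJ] at hd hl
  · exact congrArg Sum.inl (Subsingleton.elim u v)
  · exact absurd hd (by have := k'.isLt; omega)
  · exact absurd hd (by omega)
  · exact absurd hd (by have := k.isLt; omega)
  · have hk : k = k' := Fin.ext (by omega)
    rw [hl, hk]
  · exact absurd hd (by have := k.isLt; omega)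
  · exact absurd hd (by omega)
  · exact absurd hd (by have := k'.isLt; omega)
  · exact congrArg (Sum.inr ∘ Sum.inr) (Subsingleton.elim u v)

def bfam (u : ZMod 4 × Jc T) : AT K T q := el K T q (emb T u)



def phi (hq : ∀ i, q i ≠ 0) : AT K T q →ₗ[K] QV K :=
  (LinearMap.applyₗ (∑ t : ZMod 4, Finsupp.single ((t, 0, 0) : QP) (1 : K))).comp
    (rhoBar K T q hq).toLinearMap

lemma phi_apply (hq : ∀ i, q i ≠ 0) (z : AT K T q) :
    phi K T q hq z = rhoBar K T q hq z (∑ t : ZMod 4, Finsupp.single ((t, 0, 0) : QP) 1) :=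
  rfl

lemma nf_zero_lab (i : ZMod 4) (l : ZMod 2) :
    nf K T q i 0 l = Finsupp.single ((i, 0, 0) : QP) 1 := by rw [nf, if_pos rfl]

lemma phi_el (hq : ∀ i, q i ≠ 0) (i : ZMod 4) (s : ℕ) (l : ZMod 2) :
    phi K T q hq (el K T q (i, s, l)) = nf K T q i s l := by
  rw [phi_apply]
  show rhoBar K T q hq (Ae K T q i * Ax K T q l ^ s) _ = _
  rw [map_mul, map_pow, Module.End.mul_apply, Ae, Ax, rhoBar_mk, rhoBar_mk, rho_vgen,
    map_sum, map_sum]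
  have hsingle : ∀ t : ZMod 4, (Finsupp.single ((t, 0, 0) : QP) (1 : K)) = nf K T q t 0 0 :=
    fun t => (nf_zero_lab K T q t 0).symm
  rw [Fintype.sum_eq_single (i + (s : ZMod 4))]
  · rw [hsingle, rho_xgen_pow_nf]
    rcases Nat.eq_zero_or_pos s with rfl | hs
    · rw [if_pos rfl, fgen_inl_nf, if_pos (by simp), nf_zero_lab, nf_zero_lab]
      simp
    · rw [if_neg (by omega), if_pos (Or.inl rfl), fgen_inl_nf]
      have h2 : i + (s : ZMod 4) - (s : ZMod 4) = i := by ring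
      rw [h2, if_pos rfl, Nat.zero_add]
  · intro t ht
    rw [hsingle, rho_xgen_pow_nf]
    rcases Nat.eq_zero_or_pos s with rfl | hs
    · rw [if_pos rfl, fgen_inl_nf, if_neg (by simpa using ht)]
    · rw [if_neg (by omega), if_pos (Or.inl rfl), fgen_inl_nf, if_neg]
      intro hti
      exact ht (by rw [← hti]; ring)

lemma phi_bfam (hq : ∀ i, q i ≠ 0) (u : ZMod 4 × Jc T) :
    phi K T q hq (bfam K T q u) = Finsupp.single (emb T u) 1 := by
  rcases u with ⟨i, u | ⟨⟨l, k⟩⟩ | u⟩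
  · exact (phi_el K T q hq i 0 0).trans (nf_zero_lab K T q i 0)
  · refine (phi_el K T q hq i ((k : ℕ) + 1) l).trans ?_
    rw [nf, if_neg (by omega), if_pos (by have := k.isLt; omega)]
    rfl
  · refine (phi_el K T q hq i (4 * T + 2) 0).trans ?_
    rw [nf, if_neg (by omega), if_neg (by omega), if_pos rfl, if_pos rfl, one_smul]
    rfl

lemma li_bfam (hq : ∀ i, q i ≠ 0) : LinearIndependent K (bfam K T q) := by
  have h0 : LinearIndependent K fun u : ZMod 4 × Jc T => Finsupp.single (emb T u) (1 : K) := by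
    have h1 := (Finsupp.basisSingleOne (R := K) (ι := QP)).linearIndependent
    have h2 := h1.comp (emb T) (emb_inj T)
    simpa [Function.comp_def] using h2
  apply LinearIndependent.of_comp (phi K T q hq)
  have he : (⇑(phi K T q hq)) ∘ (bfam K T q)
      = fun u => Finsupp.single (emb T u) (1 : K) :=
    funext fun u => phi_bfam K T q hq u
  rw [he]
  exact h0

lemma el_zero_eq (i : ZMod 4) (l : ZMod 2) :
    el K T q (i, 0, l) = bfam K T q (i, Sum.inl ()) := by
  show Ae K T q i * Ax K T q l ^ 0 = Ae K T q i * Ax K T q (labJ T (Sum.inl ())) ^ (degJ T (Sum.inl ()))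
  rw [degJ, pow_zero, pow_zero]

lemma el_top_one (hq : ∀ i, q i ≠ 0) (i : ZMod 4) :
    el K T q (i, 4 * T + 2, 1) = cc K q i • el K T q (i, 4 * T + 2, 0) := by
  show Ae K T q i * Ax K T q 1 ^ (4 * T + 2) = cc K q i • (Ae K T q i * Ax K T q 0 ^ (4 * T + 2))
  have h := Ae_top_swap K T q hq i 1
  rw [show ((1 : ZMod 2) + 1) = 0 by decide] at h
  rw [h, cc]
  rcases zmod2_cases (toL i) with h0 | h0 <;> rw [h0]
  · rw [if_neg (by decide), if_pos rfl]
  · rw [if_pos rfl, if_neg (by decide)]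

lemma el_mem_core (hq : ∀ i, q i ≠ 0) (i : ZMod 4) (s : ℕ) (l : ZMod 2) :
    el K T q (i, s, l) ∈ Submodule.span K
      (bfam K T q '' {u : ZMod 4 × Jc T |
        u.1 = i ∧ ((degJ T u.2 : ℕ) : ZMod 4) = (s : ZMod 4)}) := by
  rcases lt_or_ge s (4 * T + 2) with hlt | hge
  · rcases Nat.eq_zero_or_pos s with rfl | hs
    · rw [el_zero_eq]
      exact Submodule.subset_span ⟨(i, Sum.inl ()), ⟨rfl, by rw [degJ]⟩, rfl⟩
    · have hs1 : s - 1 + 1 = s := by omega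
      have heq : el K T q (i, s, l)
          = bfam K T q (i, Sum.inr (Sum.inl (l, ⟨s - 1, by omega⟩))) := by
        rw [bfam, emb]
        show el K T q (i, s, l) = el K T q (i, degJ T _, labJ T _)
        rw [degJ, labJ]
        rw [hs1]
      rw [heq]
      refine Submodule.subset_span ⟨_, ⟨rfl, ?_⟩, rfl⟩
      rw [degJ]
      rw [hs1]
  · rcases eq_or_lt_of_le hge with heq | hgt
    · subst heq
      rcases zmod2_cases l with rfl | rfl
      · exact Submodule.subset_span ⟨(i, Sum.inr (Sum.inr ())), ⟨rfl, rfl⟩, rfl⟩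
      · rw [el_top_one K T q hq]
        exact Submodule.smul_mem _ _
          (Submodule.subset_span ⟨(i, Sum.inr (Sum.inr ())), ⟨rfl, rfl⟩, rfl⟩)
    · have h0 : el K T q (i, s, l) = 0 := Ae_mul_pow_ge K T q hq i l s (by omega)
      rw [h0]
      exact Submodule.zero_mem _

lemma top_le_span_bfam (hq : ∀ i, q i ≠ 0) :
    (⊤ : Submodule K (AT K T q)) ≤ Submodule.span K (Set.range (bfam K T q)) := by
  refine le_trans (top_le_span_el K T q) (Submodule.span_le.2 ?_)
  rintro _ ⟨⟨i, s, l⟩, rfl⟩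
  exact Submodule.span_mono (Set.image_subset_range _ _) (el_mem_core K T q hq i s l)

def basisAT (hq : ∀ i, q i ≠ 0) : Module.Basis (ZMod 4 × Jc T) K (AT K T q) :=
  Module.Basis.mk (li_bfam K T q hq) (top_le_span_bfam K T q hq)

lemma finrank_AT (hq : ∀ i, q i ≠ 0) : Module.finrank K (AT K T q) = 32 * T + 16 := by
  rw [Module.finrank_eq_card_basis (basisAT K T q hq)]
  rw [Fintype.card_prod, Fintype.card_sum, Fintype.card_sum, Fintype.card_prod,
    Fintype.card_unit, Fintype.card_fin]
  rw [ZMod.card 4, ZMod.card 2]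
  ring



def Fs (i : ZMod 4) (n : ℕ) : Finset (ZMod 4 × Jc T) :=
  Finset.univ.filter (fun u => u.1 = i ∧ ((degJ T u.2 : ℕ) : ZMod 4) = ((n : ℕ) : ZMod 4))

lemma sandwich_apply (i t : ZMod 4) (z : AT K T q) :
    sandwich K T q i t z = Ae K T q i * (z * Ae K T q t) := rfl

lemma el_mul_Ae (j : ZMod 4) (s : ℕ) (l : ZMod 2) (t : ZMod 4) :
    el K T q (j, s, l) * Ae K T q t
      = if j = t - (s : ZMod 4) then el K T q (j, s, l) else 0 := by
  show Ae K T q j * Ax K T q l ^ s * Ae K T q t = _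
  rw [mul_assoc, Ax_pow_mul_Ae, ← mul_assoc, Ae_mul_Ae]
  split
  · rfl
  · rw [zero_mul]

lemma Ae_mul_el (i j : ZMod 4) (s : ℕ) (l : ZMod 2) :
    Ae K T q i * el K T q (j, s, l) = if i = j then el K T q (j, s, l) else 0 := by
  show Ae K T q i * (Ae K T q j * Ax K T q l ^ s) = _
  rw [← mul_assoc, Ae_mul_Ae]
  split
  · rename_i h
    rw [h]
    rfl
  · rw [zero_mul]

lemma sandwich_el_mem (hq : ∀ i, q i ≠ 0) (i : ZMod 4) (n : ℕ) (j : ZMod 4) (s : ℕ)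
    (l : ZMod 2) :
    sandwich K T q i (i + (n : ZMod 4)) (el K T q (j, s, l))
      ∈ Submodule.span K (bfam K T q '' ↑(Fs T i n)) := by
  rw [sandwich_apply, el_mul_Ae]
  split
  · rename_i h1
    rw [Ae_mul_el]
    split
    · rename_i h2
      have h3 : i = i + (n : ZMod 4) - (s : ZMod 4) := h2.trans h1
      have hs : ((s : ℕ) : ZMod 4) = ((n : ℕ) : ZMod 4) := by linear_combination h3
      rw [← h2]
      have hsub : bfam K T q '' {u : ZMod 4 × Jc T |
            u.1 = i ∧ ((degJ T u.2 : ℕ) : ZMod 4) = ((s : ℕ) : ZMod 4)}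
          ⊆ bfam K T q '' ↑(Fs T i n) := by
        rintro x ⟨u, ⟨hu1, hu2⟩, rfl⟩
        exact ⟨u, by simp [Fs, Finset.mem_filter, hu1, hu2.trans hs], rfl⟩
      exact Submodule.span_mono hsub (el_mem_core K T q hq i s l)
    · exact Submodule.zero_mem _
  · rw [mul_zero]
    exact Submodule.zero_mem _

lemma range_sandwich (hq : ∀ i, q i ≠ 0) (i : ZMod 4) (n : ℕ) :
    LinearMap.range (sandwich K T q i (i + (n : ZMod 4)))
      = Submodule.span K (bfam K T q '' ↑(Fs T i n)) := by
  apply le_antisymm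
  · have htop : (⊤ : Submodule K (AT K T q)) = Submodule.span K (Set.range (el K T q)) :=
      le_antisymm (top_le_span_el K T q) le_top
    rw [LinearMap.range_eq_map, htop, Submodule.map_span, Submodule.span_le]
    rintro _ ⟨_, ⟨⟨j, s, l⟩, rfl⟩, rfl⟩
    exact sandwich_el_mem K T q hq i n j s l
  · rw [Submodule.span_le]
    rintro _ ⟨⟨j, v⟩, hu, rfl⟩
    have hu' : j = i ∧ ((degJ T v : ℕ) : ZMod 4) = ((n : ℕ) : ZMod 4) := by
      simpa [Fs] using hu
    obtain ⟨rfl, hdeg⟩ := hu'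
    refine ⟨bfam K T q (j, v), ?_⟩
    show sandwich K T q j (j + (n : ZMod 4)) (el K T q (j, degJ T v, labJ T v))
      = el K T q (j, degJ T v, labJ T v)
    rw [sandwich_apply, el_mul_Ae, if_pos (by rw [← hdeg]; ring), Ae_mul_el, if_pos rfl]

lemma finrank_range_sandwich (hq : ∀ i, q i ≠ 0) (i : ZMod 4) (n : ℕ) :
    Module.finrank K (LinearMap.range (sandwich K T q i (i + (n : ZMod 4))))
      = (Fs T i n).card := by
  rw [range_sandwich K T q hq i n]
  have hli : LinearIndependent K
      (fun u : ↥(Fs T i n) => bfam K T q (u : ZMod 4 × Jc T)) :=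
    (li_bfam K T q hq).comp _ Subtype.val_injective
  have hsp : Set.range (fun u : ↥(Fs T i n) => bfam K T q (u : ZMod 4 × Jc T))
      = bfam K T q '' ↑(Fs T i n) := by
    rw [show (fun u : ↥(Fs T i n) => bfam K T q (u : ZMod 4 × Jc T))
        = bfam K T q ∘ (Subtype.val) from rfl, Set.range_comp, Subtype.range_coe]
  rw [← hsp, finrank_span_eq_card hli, Fintype.card_coe]

lemma card_Fs (i : ZMod 4) (n : ℕ) :
    (Fs T i n).card = (Finset.univ.filter
      (fun v : Jc T => ((degJ T v : ℕ) : ZMod 4) = ((n : ℕ) : ZMod 4))).card := by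
  have hset : Fs T i n = (Finset.univ.filter
      (fun v : Jc T => ((degJ T v : ℕ) : ZMod 4) = ((n : ℕ) : ZMod 4))).map
        ⟨fun v => (i, v), fun a b h => ((Prod.mk.injEq i a i b).mp h).2⟩ := by
    ext ⟨j, v⟩
    simp only [Fs, Finset.mem_filter, Finset.mem_map, Finset.mem_univ, true_and,
      Function.Embedding.coeFn_mk, Prod.mk.injEq]
    constructor
    · rintro ⟨rfl, h2⟩
      exact ⟨v, h2, rfl⟩
    · rintro ⟨w, hw, rfl, rfl⟩
      exact ⟨rfl, hw⟩
  rw [hset, Finset.card_map]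

lemma aux_count (r : ℕ) (hr : r < 4) (Tn : ℕ) :
    (∑ k ∈ Finset.range (4 * Tn + 1), if (k + 1) % 4 = r then 1 else 0)
      = Tn + (if r = 1 then 1 else 0) := by
  induction Tn with
  | zero =>
    have h : (0 + 1) % 4 = 1 := by omega
    simp only [Nat.mul_zero, Nat.zero_add, Finset.sum_range_one, h]
    interval_cases r <;> simp
  | succ Tn ih =>
    have hN : 4 * (Tn + 1) + 1 = 4 * Tn + 1 + 1 + 1 + 1 + 1 := by ring
    rw [hN, Finset.sum_range_succ, Finset.sum_range_succ, Finset.sum_range_succ,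
      Finset.sum_range_succ, ih]
    have h1 : (4 * Tn + 1 + 1) % 4 = 2 := by omega
    have h2 : (4 * Tn + 1 + 1 + 1) % 4 = 3 := by omega
    have h3 : (4 * Tn + 1 + 1 + 1 + 1) % 4 = 0 := by omega
    have h4 : (4 * Tn + 1 + 1 + 1 + 1 + 1) % 4 = 1 := by omega
    rw [h1, h2, h3, h4]
    interval_cases r <;> simp

lemma card_G (n : ℕ) :
    (Finset.univ.filter
      (fun v : Jc T => ((degJ T v : ℕ) : ZMod 4) = ((n : ℕ) : ZMod 4))).card
      = if n % 4 = 0 then 2 * T + 1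
        else if n % 4 = 1 then 2 * T + 2
        else if n % 4 = 2 then 2 * T + 1
        else 2 * T := by
  have hmod : ∀ m : ℕ, (((m : ℕ)) : ZMod 4) = ((n : ℕ) : ZMod 4) ↔ m % 4 = n % 4 := by
    intro m
    rw [ZMod.natCast_eq_natCast_iff]
    exact Iff.rfl
  rw [Finset.card_filter]
  rw [Fintype.sum_sum_type, Fintype.sum_sum_type, Fintype.sum_prod_type]
  simp only [degJ]
  simp only [hmod]
  have hr : n % 4 < 4 := Nat.mod_lt _ (by norm_num)
  have hkey : (∑ k : Fin (4 * T + 1), if ((k : ℕ) + 1) % 4 = n % 4 then 1 else 0)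
      = T + (if n % 4 = 1 then 1 else 0) := by
    rw [Fin.sum_univ_eq_sum_range (fun k => if (k + 1) % 4 = n % 4 then 1 else 0)]
    exact aux_count (n % 4) hr T
  simp only [hkey]
  have h0 : (0 : ℕ) % 4 = 0 := by omega
  have h2 : (4 * T + 2) % 4 = 2 := by omega
  rw [h0, h2]
  simp only [Finset.sum_const, Finset.card_univ, Fintype.card_unit, one_smul, smul_eq_mul]
  rw [ZMod.card 2]
  interval_cases h : n % 4 <;> simp <;> omega


/-- Dimensions of the spaces `e_i A e_{i+n}` in `A = A_T(q₀,q₁,q₂,q₃)`, and the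
total dimension `dim_K A = 32T + 16`. -/
theorem stmt4 (T : ℕ) (q : ZMod 4 → K) (hq : ∀ i, q i ≠ 0) :
    (∀ (i : ZMod 4) (n : ℕ),
      Module.finrank K (LinearMap.range (sandwich K T q i (i + (n : ZMod 4))))
        = if n % 4 = 0 then 2 * T + 1
          else if n % 4 = 1 then 2 * T + 2
          else if n % 4 = 2 then 2 * T + 1
          else 2 * T) ∧
    Module.finrank K (AT K T q)
      = 4 * (2 * T + 1) + 4 * (2 * T + 2) + 4 * (2 * T + 1) + 4 * (2 * T) ∧
    Module.finrank K (AT K T q) = 32 * T + 16 := by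
  refine ⟨?_, ?_, finrank_AT K T q hq⟩
  · intro i n
    rw [finrank_range_sandwich K T q hq i n, card_Fs T i n, card_G T n]
  · rw [finrank_AT K T q hq]
    ring

end
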